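/- Let M ∈ ℝ^{q×q} have entries satisfying |M_{ij} − 1/q| ≤ 1/(2q), and define ε_{ij} = M_{ij} − 1/q and ε = max{max_j|Σ_i ε_{ij}|, max_i|Σ_j ε_{ij}|}, assuming ε ≤ 1/(24√q). If (ε*, η*) ∈ ℝ^q × ℝ^q minimizes F(ε, η) = Σ_{ij} M_{ij} exp(ε_i + η_j) − Σ_i ε_i − Σ_j η_j, then |ε*_i + η*_j| ≤ 48√q·ε for all i, j. -/

import Mathlib

open Finset

private lemma exp_quad_neg {x : ℝ} (hx : x ≤ 0) :
    x ^ 2 * Real.exp x / 2 ≤ Real.exp x - 1 - x := by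
  set f : ℝ → ℝ := fun y => Real.exp y - y ^ 2 * Real.exp y / 2 - y - 1 with hf
  have hder : ∀ y : ℝ, HasDerivAt f
      (Real.exp y - (2 * y * Real.exp y + y ^ 2 * Real.exp y) / 2 - 1) y := by
    intro y
    have h1 : HasDerivAt (fun x : ℝ => x ^ 2) (2 * y) y := by
      simpa using hasDerivAt_pow 2 y
    have h2 : HasDerivAt Real.exp (Real.exp y) y := Real.hasDerivAt_exp y
    have h3 : HasDerivAt (fun x : ℝ => x ^ 2 * Real.exp x)
        (2 * y * Real.exp y + y ^ 2 * Real.exp y) y := h1.mul h2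
    have h4 := ((h2.sub (h3.div_const 2)).sub (hasDerivAt_id y)).sub_const 1
    exact h4
  have hanti : AntitoneOn f (Set.Iic 0) := by
    apply antitoneOn_of_deriv_nonpos (convex_Iic 0)
    · exact (fun y _ => (hder y).differentiableAt.continuousAt.continuousWithinAt)
    · exact fun y _ => (hder y).differentiableAt.differentiableWithinAt
    · intro y hy
      rw [(hder y).deriv]
      have hy0 : y < 0 := by simpa using hy
      have hexp : Real.exp y * Real.exp (-y) = 1 := by
        rw [← Real.exp_add]; simp
      have h5 : -y + 1 ≤ Real.exp (-y) := Real.add_one_le_exp (-y)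
      nlinarith [Real.exp_pos y, sq_nonneg y, Real.exp_pos (-y),
        mul_le_mul_of_nonneg_left h5 (Real.exp_pos y).le]
  have h0 : f 0 ≤ f x := hanti (Set.mem_Iic.mpr hx) (Set.mem_Iic.mpr le_rfl) hx
  simp only [hf] at h0
  norm_num at h0
  linarith

private lemma exp_quad {x : ℝ} (hx : (2 : ℝ) / 9 ≤ Real.exp x) :
    x ^ 2 / 9 ≤ Real.exp x - 1 - x := by
  rcases le_or_gt 0 x with h | h
  · have h1 : x / 2 + 1 ≤ Real.exp (x / 2) := Real.add_one_le_exp (x / 2)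
    have h2 : Real.exp (x / 2) * Real.exp (x / 2) = Real.exp x := by
      rw [← Real.exp_add]; ring_nf
    nlinarith [Real.exp_pos (x / 2)]
  · have h1 := exp_quad_neg h.le
    nlinarith [sq_nonneg x]

private lemma sinkhorn_stationary (q : ℕ) (hq : 0 < q) (M : Fin q → Fin q → ℝ)
    (hMpos : ∀ i j, 0 < M i j) (es hs : Fin q → ℝ)
    (hmin : ∀ e' h' : Fin q → ℝ,
      (∑ i, ∑ j, M i j * Real.exp (es i + hs j)) - (∑ i, es i) - (∑ j, hs j) ≤
        (∑ i, ∑ j, M i j * Real.exp (e' i + h' j)) - (∑ i, e' i) - (∑ j, h' j)) :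
    ∀ i, (∑ j, M i j * Real.exp (es i + hs j)) = 1 := by
  have : Nonempty (Fin q) := ⟨⟨0, hq⟩⟩
  intro i0
  set R : ℝ := ∑ j, M i0 j * Real.exp (es i0 + hs j) with hR
  have hRpos : 0 < R :=
    Finset.sum_pos (fun j _ => mul_pos (hMpos i0 j) (Real.exp_pos _)) univ_nonempty
  have key : ∀ s : ℝ, 0 ≤ (Real.exp s - 1) * R - s := by
    intro s
    have h := hmin (Function.update es i0 (es i0 + s)) hs
    have hupd : ∀ i, Function.update es i0 (es i0 + s) i
        = es i + (if i = i0 then s else 0) := by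
      intro i
      rcases eq_or_ne i i0 with rfl | hne
      · simp
      · simp [Function.update_of_ne hne, hne]
    have hs1 : (∑ i, Function.update es i0 (es i0 + s) i) = (∑ i, es i) + s := by
      simp only [hupd]
      rw [Finset.sum_add_distrib]
      simp
    have hs2 : (∑ i, ∑ j, M i j * Real.exp (Function.update es i0 (es i0 + s) i + hs j))
        = (∑ i, ∑ j, M i j * Real.exp (es i + hs j)) + (Real.exp s - 1) * R := by
      have hterm : ∀ i, (∑ j, M i j * Real.exp (Function.update es i0 (es i0 + s) i + hs j))
          = (∑ j, M i j * Real.exp (es i + hs j))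
            + (if i = i0 then (Real.exp s - 1) * R else 0) := by
        intro i
        rcases eq_or_ne i i0 with rfl | hne
        · simp only [Function.update_self, eq_self_iff_true, if_true, hR]
          rw [Finset.mul_sum, ← Finset.sum_add_distrib]
          apply Finset.sum_congr rfl
          intro j _
          rw [show es i + s + hs j = s + (es i + hs j) by ring, Real.exp_add]
          ring
        · simp [Function.update_of_ne hne, hne]
      rw [Finset.sum_congr rfl fun i _ => hterm i, Finset.sum_add_distrib]
      simp
    rw [hs1, hs2] at h
    linarith
  have hlog := key (-Real.log R)
  have hexp : Real.exp (-Real.log R) = R⁻¹ := by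
    rw [Real.exp_neg, Real.exp_log hRpos]
  rw [hexp] at hlog
  have h1 : (R⁻¹ - 1) * R = 1 - R := by field_simp
  rw [h1] at hlog
  by_contra hne
  have h2 : Real.log R < R - 1 := Real.log_lt_sub_one_of_pos hRpos hne
  linarith

private lemma exp_low_bound (q : ℕ) (hq : 0 < q) (M : Fin q → Fin q → ℝ)
    (hMlow : ∀ i j, 1 / (2 * (q : ℝ)) ≤ M i j)
    (hMhigh : ∀ i j, M i j ≤ 3 / (2 * (q : ℝ)))
    (es hs : Fin q → ℝ)
    (hrowstat : ∀ i, (∑ j, M i j * Real.exp (es i + hs j)) = 1)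
    (hcolstat : ∀ j, (∑ k, M k j * Real.exp (hs j + es k)) = 1) :
    ∀ i j, (2 : ℝ) / 9 ≤ Real.exp (es i + hs j) := by
  have hNE : Nonempty (Fin q) := ⟨⟨0, hq⟩⟩
  have hq0 : (0 : ℝ) < (q : ℝ) := by exact_mod_cast hq
  set P : ℝ := ∑ j, Real.exp (hs j) with hP
  set Q : ℝ := ∑ i, Real.exp (es i) with hQ
  have hPpos : 0 < P := Finset.sum_pos (fun j _ => Real.exp_pos _) univ_nonempty
  have hQpos : 0 < Q := Finset.sum_pos (fun i _ => Real.exp_pos _) univ_nonempty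
  have hup : ∀ i, 2 * (q : ℝ) / 3 ≤ Real.exp (es i) * P := by
    intro i
    have h1 := hrowstat i
    have hexpand : (∑ j, M i j * Real.exp (es i + hs j))
        = Real.exp (es i) * ∑ j, M i j * Real.exp (hs j) := by
      rw [Finset.mul_sum]
      apply Finset.sum_congr rfl
      intro j _
      rw [Real.exp_add]; ring
    rw [hexpand] at h1
    have h2 : (∑ j, M i j * Real.exp (hs j)) ≤ 3 / (2 * (q : ℝ)) * P := by
      rw [hP, Finset.mul_sum]
      apply Finset.sum_le_sum
      intro j _
      exact mul_le_mul_of_nonneg_right (hMhigh i j) (Real.exp_pos _).le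
    have h3 := mul_le_mul_of_nonneg_left h2 (Real.exp_pos (es i)).le
    rw [h1] at h3
    have h4 := mul_le_mul_of_nonneg_left h3 (by positivity : (0:ℝ) ≤ 2 * (q : ℝ) / 3)
    have h5 : 2 * (q : ℝ) / 3 * (Real.exp (es i) * (3 / (2 * (q : ℝ)) * P))
        = Real.exp (es i) * P := by
      field_simp
    rw [h5, mul_one] at h4
    exact h4
  have hdown : ∀ i, Real.exp (es i) * P ≤ 2 * (q : ℝ) := by
    intro i
    have h1 := hrowstat i
    have hexpand : (∑ j, M i j * Real.exp (es i + hs j))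
        = Real.exp (es i) * ∑ j, M i j * Real.exp (hs j) := by
      rw [Finset.mul_sum]
      apply Finset.sum_congr rfl
      intro j _
      rw [Real.exp_add]; ring
    rw [hexpand] at h1
    have h2 : 1 / (2 * (q : ℝ)) * P ≤ (∑ j, M i j * Real.exp (hs j)) := by
      rw [hP, Finset.mul_sum]
      apply Finset.sum_le_sum
      intro j _
      exact mul_le_mul_of_nonneg_right (hMlow i j) (Real.exp_pos _).le
    have h3 := mul_le_mul_of_nonneg_left h2 (Real.exp_pos (es i)).le
    rw [h1] at h3
    have h4 := mul_le_mul_of_nonneg_left h3 (by positivity : (0:ℝ) ≤ 2 * (q : ℝ))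
    have h5 : 2 * (q : ℝ) * (Real.exp (es i) * (1 / (2 * (q : ℝ)) * P))
        = Real.exp (es i) * P := by
      field_simp
    rw [h5, mul_one] at h4
    exact h4
  have hup' : ∀ j, 2 * (q : ℝ) / 3 ≤ Real.exp (hs j) * Q := by
    intro j
    have h1 := hcolstat j
    have hexpand : (∑ k, M k j * Real.exp (hs j + es k))
        = Real.exp (hs j) * ∑ k, M k j * Real.exp (es k) := by
      rw [Finset.mul_sum]
      apply Finset.sum_congr rfl
      intro k _
      rw [Real.exp_add]; ring
    rw [hexpand] at h1
    have h2 : (∑ k, M k j * Real.exp (es k)) ≤ 3 / (2 * (q : ℝ)) * Q := by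
      rw [hQ, Finset.mul_sum]
      apply Finset.sum_le_sum
      intro k _
      exact mul_le_mul_of_nonneg_right (hMhigh k j) (Real.exp_pos _).le
    have h3 := mul_le_mul_of_nonneg_left h2 (Real.exp_pos (hs j)).le
    rw [h1] at h3
    have h4 := mul_le_mul_of_nonneg_left h3 (by positivity : (0:ℝ) ≤ 2 * (q : ℝ) / 3)
    have h5 : 2 * (q : ℝ) / 3 * (Real.exp (hs j) * (3 / (2 * (q : ℝ)) * Q))
        = Real.exp (hs j) * Q := by
      field_simp
    rw [h5, mul_one] at h4
    exact h4
  have hPQ : P * Q ≤ 2 * (q : ℝ) ^ 2 := by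
    have h1 : (∑ i, Real.exp (es i) * P) ≤ ∑ _i : Fin q, 2 * (q : ℝ) :=
      Finset.sum_le_sum fun i _ => hdown i
    rw [← Finset.sum_mul, Finset.sum_const, Finset.card_univ, Fintype.card_fin,
      nsmul_eq_mul] at h1
    rw [← hQ] at h1
    nlinarith
  intro i j
  rw [Real.exp_add]
  have h1 := hup i
  have h2 := hup' j
  have h12 : (2 * (q : ℝ) / 3) * (2 * (q : ℝ) / 3)
      ≤ (Real.exp (es i) * P) * (Real.exp (hs j) * Q) :=
    mul_le_mul h1 h2 (by positivity) (by positivity)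
  have hq2 : (0:ℝ) < (q : ℝ) ^ 2 := by positivity
  nlinarith [Real.exp_pos (es i), Real.exp_pos (hs j), hPpos, hQpos, hq2,
    mul_pos (Real.exp_pos (es i)) (Real.exp_pos (hs j)),
    mul_le_mul_of_nonneg_left hPQ
      (mul_pos (Real.exp_pos (es i)) (Real.exp_pos (hs j))).le]

private lemma centered_upper (q : ℕ) (hq : 0 < q) (M : Fin q → Fin q → ℝ) (eps : ℝ)
    (hcol : ∀ j, |∑ i, (M i j - 1 / (q : ℝ))| ≤ eps)
    (hrow : ∀ i, |∑ j, (M i j - 1 / (q : ℝ))| ≤ eps)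
    (a b : Fin q → ℝ)
    (hcomp : (∑ i, ∑ j, M i j * Real.exp (a i + b j))
      ≤ (∑ i, ∑ j, M i j) + (∑ i, a i) + (∑ j, b j)) :
    (∑ i, ∑ j, M i j * (Real.exp (a i + b j) - 1 - (a i + b j)))
      ≤ eps * ((∑ i, |a i|) + (∑ j, |b j|)) := by
  have hq0 : (0 : ℝ) < (q : ℝ) := by exact_mod_cast hq
  have hcard : (Finset.univ : Finset (Fin q)).card = q := by simp
  have step2 : (∑ i, ∑ j, M i j * (a i + b j))
      = (∑ i, a i * (∑ j, M i j)) + (∑ j, b j * (∑ i, M i j)) := by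
    have h1 : ∀ i, (∑ j, M i j * (a i + b j))
        = a i * (∑ j, M i j) + (∑ j, M i j * b j) := by
      intro i
      rw [Finset.mul_sum, ← Finset.sum_add_distrib]
      apply Finset.sum_congr rfl
      intro j _
      ring
    rw [Finset.sum_congr rfl fun i _ => h1 i, Finset.sum_add_distrib]
    congr 1
    rw [Finset.sum_comm]
    apply Finset.sum_congr rfl
    intro j _
    rw [Finset.mul_sum]
    apply Finset.sum_congr rfl
    intro k _
    ring
  have hsplit : (∑ i, ∑ j, M i j * (Real.exp (a i + b j) - 1 - (a i + b j)))
      = (∑ i, ∑ j, M i j * Real.exp (a i + b j)) - (∑ i, ∑ j, M i j)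
        - ((∑ i, a i * (∑ j, M i j)) + (∑ j, b j * (∑ i, M i j))) := by
    rw [← step2]
    simp only [mul_sub, mul_one, Finset.sum_sub_distrib]
  have hrho : ∀ i, (∑ j, M i j) = 1 + (∑ j, (M i j - 1 / (q : ℝ))) := by
    intro i
    rw [Finset.sum_sub_distrib, Finset.sum_const, hcard, nsmul_eq_mul,
      mul_one_div, div_self hq0.ne']
    ring
  have hkap : ∀ j, (∑ i, M i j) = 1 + (∑ i, (M i j - 1 / (q : ℝ))) := by
    intro j
    rw [Finset.sum_sub_distrib, Finset.sum_const, hcard, nsmul_eq_mul,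
      mul_one_div, div_self hq0.ne']
    ring
  have hra : (∑ i, a i * (∑ j, M i j))
      = (∑ i, a i) + ∑ i, a i * (∑ j, (M i j - 1 / (q : ℝ))) := by
    rw [← Finset.sum_add_distrib]
    apply Finset.sum_congr rfl
    intro i _
    rw [hrho i]; ring
  have hrb : (∑ j, b j * (∑ i, M i j))
      = (∑ j, b j) + ∑ j, b j * (∑ i, (M i j - 1 / (q : ℝ))) := by
    rw [← Finset.sum_add_distrib]
    apply Finset.sum_congr rfl
    intro j _
    rw [hkap j]; ring
  have habs1 : -(∑ i, a i * (∑ j, (M i j - 1 / (q : ℝ)))) ≤ eps * (∑ i, |a i|) := by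
    have hterm : ∀ i ∈ (univ : Finset (Fin q)),
        -(a i * (∑ j, (M i j - 1 / (q : ℝ)))) ≤ eps * |a i| := by
      intro i _
      have h1 : |a i * ∑ j, (M i j - 1 / (q : ℝ))| ≤ |a i| * eps := by
        rw [abs_mul]
        exact mul_le_mul_of_nonneg_left (hrow i) (abs_nonneg _)
      have h2 := neg_le_abs (a i * ∑ j, (M i j - 1 / (q : ℝ)))
      have h3 : |a i| * eps = eps * |a i| := mul_comm _ _
      linarith
    calc -(∑ i, a i * (∑ j, (M i j - 1 / (q : ℝ))))
        = ∑ i, -(a i * (∑ j, (M i j - 1 / (q : ℝ)))) := by rw [Finset.sum_neg_distrib]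
      _ ≤ ∑ i, eps * |a i| := Finset.sum_le_sum hterm
      _ = eps * ∑ i, |a i| := by rw [Finset.mul_sum]
  have habs2 : -(∑ j, b j * (∑ i, (M i j - 1 / (q : ℝ)))) ≤ eps * (∑ j, |b j|) := by
    have hterm : ∀ j ∈ (univ : Finset (Fin q)),
        -(b j * (∑ i, (M i j - 1 / (q : ℝ)))) ≤ eps * |b j| := by
      intro j _
      have h1 : |b j * ∑ i, (M i j - 1 / (q : ℝ))| ≤ |b j| * eps := by
        rw [abs_mul]
        exact mul_le_mul_of_nonneg_left (hcol j) (abs_nonneg _)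
      have h2 := neg_le_abs (b j * ∑ i, (M i j - 1 / (q : ℝ)))
      have h3 : |b j| * eps = eps * |b j| := mul_comm _ _
      linarith
    calc -(∑ j, b j * (∑ i, (M i j - 1 / (q : ℝ))))
        = ∑ j, -(b j * (∑ i, (M i j - 1 / (q : ℝ)))) := by rw [Finset.sum_neg_distrib]
      _ ≤ ∑ j, eps * |b j| := Finset.sum_le_sum hterm
      _ = eps * ∑ j, |b j| := by rw [Finset.mul_sum]
  rw [hsplit, hra, hrb]
  linarith [hcomp, habs1, habs2]

private lemma sq_sum_expand (q : ℕ) (a b : Fin q → ℝ) (hsb : (∑ j, b j) = 0) :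
    (∑ i, ∑ j, (a i + b j) ^ 2)
      = (q : ℝ) * (∑ i, (a i) ^ 2) + (q : ℝ) * (∑ j, (b j) ^ 2) := by
  have hcard : (Finset.univ : Finset (Fin q)).card = q := by simp
  have h1 : ∀ i, (∑ j, (a i + b j) ^ 2)
      = (q : ℝ) * (a i) ^ 2 + 2 * a i * (∑ j, b j) + (∑ j, (b j) ^ 2) := by
    intro i
    have hterm : ∀ j, (a i + b j) ^ 2 = (a i) ^ 2 + 2 * a i * b j + (b j) ^ 2 :=
      fun j => by ring
    rw [Finset.sum_congr rfl fun j _ => hterm j, Finset.sum_add_distrib,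
      Finset.sum_add_distrib, Finset.sum_const, hcard, nsmul_eq_mul, ← Finset.mul_sum]
  rw [Finset.sum_congr rfl fun i _ => h1 i, hsb]
  simp only [mul_zero, add_zero]
  rw [Finset.sum_add_distrib, ← Finset.mul_sum, Finset.sum_const, hcard, nsmul_eq_mul]

private lemma final_numeric {A B LA LB eps qr x : ℝ} (hq0 : 0 < qr) (heps0 : 0 ≤ eps)
    (hmain : A + B ≤ 18 * eps * (LA + LB))
    (hLA2 : LA ^ 2 ≤ qr * A) (hLB2 : LB ^ 2 ≤ qr * B)
    (hA0 : 0 ≤ A) (hB0 : 0 ≤ B) (hLA0 : 0 ≤ LA) (hLB0 : 0 ≤ LB)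
    (hx : x ^ 2 ≤ 2 * (A + B)) :
    x ^ 2 ≤ 2304 * qr * eps ^ 2 := by
  have h1 : (A + B) ^ 2 ≤ (18 * eps * (LA + LB)) ^ 2 :=
    pow_le_pow_left₀ (by linarith) hmain 2
  have h2 : (LA + LB) ^ 2 ≤ 2 * qr * (A + B) := by
    nlinarith [sq_nonneg (LA - LB)]
  have h3 := mul_le_mul_of_nonneg_left h2 (by positivity : (0 : ℝ) ≤ 324 * eps ^ 2)
  have hT : A + B ≤ 648 * qr * eps ^ 2 := by
    nlinarith [h1, h3, hA0, hB0, mul_nonneg hq0.le (sq_nonneg eps),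
      sq_nonneg (A + B - 648 * qr * eps ^ 2)]
  nlinarith [mul_nonneg hq0.le (sq_nonneg eps)]

/-- Let `M ∈ ℝ^{q×q}` with `|M_{ij} − 1/q| ≤ 1/(2q)` and let `ε` bound the absolute row and
column sums of `ε_{ij} = M_{ij} − 1/q`, with `ε ≤ 1/(24√q)`.  If `(ε*, η*)` minimizes
`F(ε, η) = Σ_{ij} M_{ij} exp(ε_i + η_j) − Σ_i ε_i − Σ_j η_j`, then
`|ε*_i + η*_j| ≤ 48√q·ε` for all `i, j`. -/
theorem sinkhorn_potential_stability (q : ℕ) (hq : 0 < q) (M : Fin q → Fin q → ℝ)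
    (hM : ∀ i j, |M i j - 1 / (q : ℝ)| ≤ 1 / (2 * (q : ℝ)))
    (eps : ℝ)
    (hcol : ∀ j, |∑ i, (M i j - 1 / (q : ℝ))| ≤ eps)
    (hrow : ∀ i, |∑ j, (M i j - 1 / (q : ℝ))| ≤ eps)
    (heps : eps ≤ 1 / (24 * Real.sqrt q))
    (es hs : Fin q → ℝ)
    (hmin : ∀ e' h' : Fin q → ℝ,
      (∑ i, ∑ j, M i j * Real.exp (es i + hs j)) - (∑ i, es i) - (∑ j, hs j) ≤
        (∑ i, ∑ j, M i j * Real.exp (e' i + h' j)) - (∑ i, e' i) - (∑ j, h' j)) :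
    ∀ i j, |es i + hs j| ≤ 48 * Real.sqrt q * eps := by
  have hNE : Nonempty (Fin q) := ⟨⟨0, hq⟩⟩
  have hq1 : (1 : ℝ) ≤ (q : ℝ) := by exact_mod_cast hq
  have hq0 : (0 : ℝ) < (q : ℝ) := by linarith
  have heps0 : 0 ≤ eps := le_trans (abs_nonneg _) (hcol ⟨0, hq⟩)
  have hMlow : ∀ i j, 1 / (2 * (q : ℝ)) ≤ M i j := by
    intro i j
    have h1 := (abs_le.mp (hM i j)).1
    have h2 : 1 / (q : ℝ) - 1 / (2 * (q : ℝ)) = 1 / (2 * (q : ℝ)) := by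
      field_simp; ring
    linarith
  have hMhigh : ∀ i j, M i j ≤ 3 / (2 * (q : ℝ)) := by
    intro i j
    have h1 := (abs_le.mp (hM i j)).2
    have h2 : 1 / (q : ℝ) + 1 / (2 * (q : ℝ)) = 3 / (2 * (q : ℝ)) := by
      field_simp; ring
    linarith
  have hMpos : ∀ i j, 0 < M i j := fun i j =>
    lt_of_lt_of_le (by positivity) (hMlow i j)
  have hrowstat := sinkhorn_stationary q hq M hMpos es hs hmin
  have hmin' : ∀ e' h' : Fin q → ℝ,
      (∑ i, ∑ j, M j i * Real.exp (hs i + es j)) - (∑ i, hs i) - (∑ j, es j) ≤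
        (∑ i, ∑ j, M j i * Real.exp (e' i + h' j)) - (∑ i, e' i) - (∑ j, h' j) := by
    intro e' h'
    have h := hmin h' e'
    have e1 : (∑ i, ∑ j, M j i * Real.exp (hs i + es j))
        = ∑ i, ∑ j, M i j * Real.exp (es i + hs j) := by
      rw [Finset.sum_comm]
      apply Finset.sum_congr rfl; intro i _
      apply Finset.sum_congr rfl; intro j _
      rw [add_comm]
    have e2 : (∑ i, ∑ j, M j i * Real.exp (e' i + h' j))
        = ∑ i, ∑ j, M i j * Real.exp (h' i + e' j) := by
      rw [Finset.sum_comm]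
      apply Finset.sum_congr rfl; intro i _
      apply Finset.sum_congr rfl; intro j _
      rw [add_comm]
    rw [e1, e2]
    linarith
  have hcolstat := sinkhorn_stationary q hq (fun i j => M j i)
    (fun i j => hMpos j i) hs es hmin'
  have hkey29 := exp_low_bound q hq M hMlow hMhigh es hs hrowstat hcolstat
  -- recentred potentials
  set d : ℝ := (∑ j, hs j) / q with hd
  set a : Fin q → ℝ := fun i => es i + d with hadef
  set b : Fin q → ℝ := fun j => hs j - d with hbdef
  have hab : ∀ i j, es i + hs j = a i + b j := by
    intro i j; simp only [hadef, hbdef]; ring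
  have hcard : (Finset.univ : Finset (Fin q)).card = q := by simp
  have hsa : (∑ i, a i) = (∑ i, es i) + (q : ℝ) * d := by
    simp only [hadef]
    rw [Finset.sum_add_distrib, Finset.sum_const, hcard, nsmul_eq_mul]
  have hsbb : (∑ j, b j) = (∑ j, hs j) - (q : ℝ) * d := by
    simp only [hbdef]
    rw [Finset.sum_sub_distrib, Finset.sum_const, hcard, nsmul_eq_mul]
  have hsb : (∑ j, b j) = 0 := by
    rw [hsbb, hd]
    field_simp
    ring
  -- comparison with (0,0)
  have hcomp : (∑ i, ∑ j, M i j * Real.exp (a i + b j))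
      ≤ (∑ i, ∑ j, M i j) + (∑ i, a i) + (∑ j, b j) := by
    have h := hmin (fun _ => 0) (fun _ => 0)
    simp only [add_zero, Real.exp_zero, mul_one, Finset.sum_const_zero, sub_zero] at h
    have e1 : (∑ i, ∑ j, M i j * Real.exp (es i + hs j))
        = ∑ i, ∑ j, M i j * Real.exp (a i + b j) := by
      apply Finset.sum_congr rfl; intro i _
      apply Finset.sum_congr rfl; intro j _
      rw [hab]
    rw [e1] at h
    linarith
  have hABs := centered_upper q hq M eps hcol hrow a b hcomp
  -- pointwise quadratic lower bound
  have hlow' : ∀ i j, 1 / (2 * (q : ℝ)) * ((a i + b j) ^ 2 / 9)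
      ≤ M i j * (Real.exp (a i + b j) - 1 - (a i + b j)) := by
    intro i j
    have h29 := hkey29 i j
    rw [hab i j] at h29
    have hquad := exp_quad h29
    exact mul_le_mul (hMlow i j) hquad (by positivity) (hMpos i j).le
  have hsq := sq_sum_expand q a b hsb
  set A : ℝ := ∑ i, (a i) ^ 2 with hA
  set B : ℝ := ∑ j, (b j) ^ 2 with hB
  set LA : ℝ := ∑ i, |a i| with hLA
  set LB : ℝ := ∑ j, |b j| with hLB
  have hmain : A + B ≤ 18 * eps * (LA + LB) := by
    have hlow : (∑ i, ∑ j, 1 / (2 * (q : ℝ)) * ((a i + b j) ^ 2 / 9))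
        ≤ ∑ i, ∑ j, M i j * (Real.exp (a i + b j) - 1 - (a i + b j)) :=
      Finset.sum_le_sum fun i _ => Finset.sum_le_sum fun j _ => hlow' i j
    have hlhs : (∑ i, ∑ j, 1 / (2 * (q : ℝ)) * ((a i + b j) ^ 2 / 9))
        = 1 / (2 * (q : ℝ)) * (1 / 9) * (∑ i, ∑ j, (a i + b j) ^ 2) := by
      rw [Finset.mul_sum]
      apply Finset.sum_congr rfl
      intro i _
      rw [Finset.mul_sum]
      apply Finset.sum_congr rfl
      intro j _
      ring
    rw [hlhs, hsq] at hlow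
    have hfin := le_trans hlow hABs
    have heq : 1 / (2 * (q : ℝ)) * (1 / 9) * ((q : ℝ) * A + (q : ℝ) * B)
        = (A + B) / 18 := by
      field_simp
      ring
    rw [heq] at hfin
    linarith
  have hA0 : 0 ≤ A := Finset.sum_nonneg fun _ _ => sq_nonneg _
  have hB0 : 0 ≤ B := Finset.sum_nonneg fun _ _ => sq_nonneg _
  have hLA0 : 0 ≤ LA := Finset.sum_nonneg fun _ _ => abs_nonneg _
  have hLB0 : 0 ≤ LB := Finset.sum_nonneg fun _ _ => abs_nonneg _
  have hLA2 : LA ^ 2 ≤ (q : ℝ) * A := by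
    have h := sq_sum_le_card_mul_sum_sq (s := (univ : Finset (Fin q)))
      (f := fun k => |a k|)
    simp only [sq_abs, hcard] at h
    exact_mod_cast h
  have hLB2 : LB ^ 2 ≤ (q : ℝ) * B := by
    have h := sq_sum_le_card_mul_sum_sq (s := (univ : Finset (Fin q)))
      (f := fun k => |b k|)
    simp only [sq_abs, hcard] at h
    exact_mod_cast h
  intro i j
  rw [hab i j]
  have haA : (a i) ^ 2 ≤ A :=
    Finset.single_le_sum (fun k _ => sq_nonneg (a k)) (Finset.mem_univ i)
  have hbB : (b j) ^ 2 ≤ B :=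
    Finset.single_le_sum (fun k _ => sq_nonneg (b k)) (Finset.mem_univ j)
  have hx : (a i + b j) ^ 2 ≤ 2 * (A + B) := by
    nlinarith [sq_nonneg (a i - b j)]
  have hkey : (a i + b j) ^ 2 ≤ 2304 * (q : ℝ) * eps ^ 2 :=
    final_numeric hq0 heps0 hmain hLA2 hLB2 hA0 hB0 hLA0 hLB0 hx
  calc |a i + b j| = Real.sqrt ((a i + b j) ^ 2) := (Real.sqrt_sq_eq_abs _).symm
    _ ≤ Real.sqrt (2304 * (q : ℝ) * eps ^ 2) := Real.sqrt_le_sqrt hkey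
    _ = 48 * Real.sqrt q * eps := by
        rw [show (2304 : ℝ) * (q : ℝ) * eps ^ 2 = (48 * Real.sqrt q * eps) ^ 2 by
          rw [mul_pow, mul_pow, Real.sq_sqrt hq0.le]; ring]
        exact Real.sqrt_sq (by positivity)
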